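/- For every permutation of the rows of the 4×4 matrix with zeros exactly on the diagonal and ones elsewhere, there exist two columns whose restriction to the permuted rows realizes (up to choosing which of the two columns is first) the column-unordered pattern [[1,*],[0,1],[1,0],[*,1]]: i.e., for each permutation σ of Fin 4 there exist distinct columns p, q such that, writing N i = M (σ i), one has N 1 p = false, N 1 q = true, N 2 p = true, N 2 q = false, and both N 0 p = true and N 3 q = true. -/
import Mathlib

def StickOrder {n m : ℕ} (M : Fin n → Fin m → Bool) : Prop :=
  ∃ (ra : Fin n → ℕ) (rb : Fin m → ℕ),
    StrictMono ra ∧ StrictMono rb ∧ (∀ i p, ra i ≠ rb p) ∧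
    ∀ j p, M j p = true ↔
      (ra j < rb p ∧ (∃ q, p ≤ q ∧ M j q = true) ∧ (∃ i, i ≤ j ∧ M i p = true))

def HEdge {n m : ℕ} (M : Fin n → Fin m → Bool) :
    Fin n ⊕ Fin m → Fin n ⊕ Fin m → Prop
  | Sum.inl i, Sum.inl i' => i < i'
  | Sum.inr p, Sum.inr p' => p < p'
  | Sum.inl i, Sum.inr p => M i p = true
  | Sum.inr p, Sum.inl j =>
      ∃ i, i < j ∧ ∃ q, p < q ∧ M i p = true ∧ M j p = false ∧ M j q = true

def P1 {n m : ℕ} (M : Fin n → Fin m → Bool) : Prop :=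
  ∃ i j k : Fin n, i < j ∧ j < k ∧ ∃ p q r : Fin m, p < q ∧ q < r ∧
    M i q = true ∧ M j q = false ∧ M j r = true ∧ M k p = true

def P2 {n m : ℕ} (M : Fin n → Fin m → Bool) : Prop :=
  ∃ i j k : Fin n, i < j ∧ j < k ∧ ∃ p q : Fin m, p < q ∧
    M i p = true ∧ M j p = false ∧ M j q = true ∧ M k p = true

def P3 {n m : ℕ} (M : Fin n → Fin m → Bool) : Prop :=
  ∃ i j : Fin n, i < j ∧ ∃ p q r : Fin m, p < q ∧ q < r ∧
    M i q = true ∧ M j p = true ∧ M j q = false ∧ M j r = true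

theorem stmt_14 (M : Fin 4 → Fin 4 → Bool)
    (hM : ∀ i p, M i p = true ↔ i ≠ p) :
    ∀ σ : Equiv.Perm (Fin 4), ∃ p q : Fin 4, p ≠ q ∧
      M (σ 1) p = false ∧ M (σ 1) q = true ∧
      M (σ 2) p = true ∧ M (σ 2) q = false ∧
      M (σ 0) p = true ∧ M (σ 3) q = true := by
  intro σ
  have hF : ∀ i p : Fin 4, M i p = false ↔ i = p := by
    intro i p
    rw [← Bool.not_eq_true, hM]; simp
  refine ⟨σ 1, σ 2, ?_, ?_, ?_, ?_, ?_, ?_, ?_⟩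
  · simp [σ.injective.ne_iff]
  · exact (hF _ _).mpr rfl
  · exact (hM _ _).mpr (by simp [σ.injective.ne_iff])
  · exact (hM _ _).mpr (by simp [σ.injective.ne_iff])
  · exact (hF _ _).mpr rfl
  · exact (hM _ _).mpr (by simp [σ.injective.ne_iff])
  · exact (hM _ _).mpr (by simp [σ.injective.ne_iff])
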